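/- For a Grothendieck topos E the following are equivalent: (1) every subobject of every object of E is complemented; (2) every object of E is decidable. -/

import Mathlib

/-!
Formalisation of a statement from "On the profinite fundamental group of a
connected Grothendieck topos" (Berger–Iwaniack).  A Grothendieck topos is
modelled as `Sheaf J (Type u)` for a small site `(C, J)`.
-/

open CategoryTheory CategoryTheory.Limits

universe u

instance sheafTypeHasColimits {C : Type u} [SmallCategory C] (J : GrothendieckTopology C) :
    HasColimitsOfSize.{u, u} (Sheaf J (Type u)) :=
  @CategoryTheory.Sheaf.instHasColimitsOfSize _ _ J (Type u) _ _ _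

/-- A subobject `s` of `X` is complemented if it has a complement in the
subobject lattice of `X`. -/
def IsComplementedSub {C : Type u} [SmallCategory C] {J : GrothendieckTopology C}
    {X : Sheaf J (Type u)} (s : Subobject X) : Prop :=
  ∃ t : Subobject X, s ⊓ t = ⊥ ∧ s ⊔ t = ⊤

/-- An object is decidable if its diagonal, regarded as a subobject of `X ⨯ X`,
is complemented. -/
def IsDecidableObj {C : Type u} [SmallCategory C] {J : GrothendieckTopology C}
    (X : Sheaf J (Type u)) : Prop :=
  IsComplementedSub (Subobject.mk (diag X))

/-- An object is connected if it is not initial and its only complemented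
subobjects are `⊥` and `⊤`. -/
def IsConnectedObj {C : Type u} [SmallCategory C] {J : GrothendieckTopology C}
    (X : Sheaf J (Type u)) : Prop :=
  (¬ Nonempty (IsInitial X)) ∧
    ∀ s : Subobject X, IsComplementedSub s → s = ⊥ ∨ s = ⊤

/-- An object is locally connected if it is (isomorphic to) a coproduct of
connected objects. -/
def IsLocallyConnectedObj {C : Type u} [SmallCategory C] {J : GrothendieckTopology C}
    (X : Sheaf J (Type u)) : Prop :=
  ∃ (I : Type u) (Z : I → Sheaf J (Type u)),
    (∀ i, IsConnectedObj (Z i)) ∧ Nonempty (X ≅ ∐ Z)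

/-- An object is locally constant if it is trivialised, with constant fibres,
by some cover of the terminal object. -/
def IsLocallyConstantObj {C : Type u} [SmallCategory C] {J : GrothendieckTopology C}
    (X : Sheaf J (Type u)) : Prop :=
  ∃ (I : Type u) (U : I → Sheaf J (Type u)),
    Epi (terminal.from (∐ U)) ∧
    ∀ i, ∃ (S : Type u)
      (e : X ⨯ U i ≅ (constantSheaf J (Type u)).obj S ⨯ U i),
      e.hom ≫ Limits.prod.snd = Limits.prod.snd

/-- An object is locally finite if it is trivialised, with finite constant
fibres, by some cover of the terminal object. -/
def IsLocallyFiniteObj {C : Type u} [SmallCategory C] {J : GrothendieckTopology C}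
    (X : Sheaf J (Type u)) : Prop :=
  ∃ (I : Type u) (U : I → Sheaf J (Type u)),
    Epi (terminal.from (∐ U)) ∧
    ∀ i, ∃ (n : ℕ)
      (e : X ⨯ U i ≅ (constantSheaf J (Type u)).obj (ULift.{u} (Fin n)) ⨯ U i),
      e.hom ≫ Limits.prod.snd = Limits.prod.snd

/-- An object is finite if it is locally finite and a finite coproduct of
connected objects. -/
def IsFiniteObj {C : Type u} [SmallCategory C] {J : GrothendieckTopology C}
    (X : Sheaf J (Type u)) : Prop :=
  IsLocallyFiniteObj X ∧
    ∃ (n : ℕ) (Z : Fin n → Sheaf J (Type u)),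
      (∀ k, IsConnectedObj (Z k)) ∧ Nonempty (X ≅ ∐ Z)

/-- An object is a sum of finite objects if it is isomorphic to a coproduct of
finite objects. -/
def IsSumOfFiniteObj {C : Type u} [SmallCategory C] {J : GrothendieckTopology C}
    (X : Sheaf J (Type u)) : Prop :=
  ∃ (I : Type u) (Z : I → Sheaf J (Type u)),
    (∀ i, IsFiniteObj (Z i)) ∧ Nonempty (X ≅ ∐ Z)

/-- A Galois object: a connected, globally supported object `A` such that the
canonical morphism `∐_{g ∈ Aut A} A ⟶ A ⨯ A` is an isomorphism. -/
def IsGaloisObj {C : Type u} [SmallCategory C] {J : GrothendieckTopology C}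
    (A : Sheaf J (Type u)) : Prop :=
  IsConnectedObj A ∧ Epi (terminal.from A) ∧
    IsIso (Sigma.desc (f := fun _ : Aut A => A)
      (fun g => Limits.prod.lift (𝟙 A) g.hom))


section AuxiliaryLemmas

universe v w

variable {D : Type w} [Category.{v} D]

/-- Elementwise surjectivity property of pullback squares in `Type`. -/
lemma aux_types_exists_of_isPullback {P F G H : Type v} {fst : P ⟶ F} {snd : P ⟶ H}
    {f : F ⟶ G} {g : H ⟶ G} (hp : IsPullback fst snd f g) (y : F) (x : H)
    (h : f y = g x) : ∃ z : P, fst z = y ∧ snd z = x := by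
  let u : PUnit.{v+1} ⟶ F := TypeCat.ofHom fun _ => y
  let v : PUnit.{v+1} ⟶ H := TypeCat.ofHom fun _ => x
  have hc : u ≫ f = v ≫ g := by ext; exact h
  exact ⟨hp.lift u v hc PUnit.unit, congrArg (fun m => m PUnit.unit) (hp.lift_fst u v hc),
    congrArg (fun m => m PUnit.unit) (hp.lift_snd u v hc)⟩

lemma aux_pullback_obj_mk_snd [HasPullbacks D] {X Y Z : D} (h : X ⟶ Z) (i : Y ⟶ Z) [Mono h] :
    (Subobject.pullback i).obj (Subobject.mk h) = Subobject.mk (pullback.snd h i) := by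
  apply Quotient.sound'
  exact ⟨MonoOver.isoMk (Iso.refl _) (by simp)⟩

lemma aux_pullback_obj_mk_of_isPullback [HasPullbacks D] {W X Y Z : D}
    {ff : W ⟶ X} {g : W ⟶ Y} {h : X ⟶ Z} {i : Y ⟶ Z} [Mono h] [Mono g]
    (hp : IsPullback ff g h i) :
    (Subobject.pullback i).obj (Subobject.mk h) = Subobject.mk g := by
  rw [aux_pullback_obj_mk_snd h i]
  symm
  exact Subobject.mk_eq_mk_of_comm _ _ hp.isoPullback hp.isoPullback_hom_snd

lemma aux_pullback_obj_bot [HasPullbacks D] [HasStrictInitialObjects D] [HasInitial D]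
    {X Y : D} (k : X ⟶ Y) : (Subobject.pullback k).obj ⊥ = ⊥ := by
  rw [Subobject.bot_eq_initial_to, aux_pullback_obj_mk_snd]
  have hI : IsInitial (pullback (initial.to Y) k) :=
    IsInitial.ofStrict (pullback.fst _ _) initialIsInitial
  rw [Subobject.bot_eq_initial_to]
  symm
  exact Subobject.mk_eq_mk_of_comm _ _
    (initialIsInitial.uniqueUpToIso hI) (initialIsInitial.hom_ext _ _)

lemma aux_sup_mk_eq_top_iff_epi [HasPullbacks D] [HasImages D] [HasBinaryCoproducts D]
    [HasEqualizers D] [Balanced D] {A A' B : D} (f : A ⟶ B) (g : A' ⟶ B)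
    [Mono f] [Mono g] :
    Subobject.mk f ⊔ Subobject.mk g = ⊤ ↔ Epi (coprod.desc f g) := by
  constructor
  · intro htop
    refine ⟨fun {W} p q hpq => ?_⟩
    have h1 : f ≫ p = f ≫ q := by
      calc f ≫ p = coprod.inl ≫ coprod.desc f g ≫ p := by rw [coprod.inl_desc_assoc]
        _ = coprod.inl ≫ coprod.desc f g ≫ q := by rw [hpq]
        _ = f ≫ q := by rw [coprod.inl_desc_assoc]
    have h2 : g ≫ p = g ≫ q := by
      calc g ≫ p = coprod.inr ≫ coprod.desc f g ≫ p := by rw [coprod.inr_desc_assoc]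
        _ = coprod.inr ≫ coprod.desc f g ≫ q := by rw [hpq]
        _ = g ≫ q := by rw [coprod.inr_desc_assoc]
    have hle : Subobject.mk f ⊔ Subobject.mk g ≤ Subobject.mk (equalizer.ι p q) :=
      sup_le (Subobject.mk_le_mk_of_comm (equalizer.lift f h1) (equalizer.lift_ι _ _))
        (Subobject.mk_le_mk_of_comm (equalizer.lift g h2) (equalizer.lift_ι _ _))
    rw [htop] at hle
    have h3 : Subobject.mk (equalizer.ι p q) = ⊤ := le_antisymm le_top hle
    have : IsIso (equalizer.ι p q) := (Subobject.isIso_iff_mk_eq_top _).2 h3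
    rw [← cancel_epi (equalizer.ι p q)]
    exact equalizer.condition p q
  · intro hepi
    have hf : (Subobject.mk f ⊔ Subobject.mk g).Factors f :=
      Subobject.sup_factors_of_factors_left (Subobject.mk_factors_self f)
    have hg : (Subobject.mk f ⊔ Subobject.mk g).Factors g :=
      Subobject.sup_factors_of_factors_right (Subobject.mk_factors_self g)
    have fac : coprod.desc ((Subobject.mk f ⊔ Subobject.mk g).factorThru f hf)
        ((Subobject.mk f ⊔ Subobject.mk g).factorThru g hg) ≫
        (Subobject.mk f ⊔ Subobject.mk g).arrow = coprod.desc f g := by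
      apply coprod.hom_ext <;> simp
    have : Epi (Subobject.mk f ⊔ Subobject.mk g).arrow := epi_of_epi_fac fac
    have : IsIso (Subobject.mk f ⊔ Subobject.mk g).arrow := isIso_of_mono_of_epi _
    exact Subobject.eq_top_of_isIso_arrow _

variable {C : Type u} [SmallCategory C] {J : GrothendieckTopology C}

/-- Epimorphisms of sheaves of types are stable under pullback. -/
lemma aux_epi_snd_of_isPullback {P F G H : Sheaf J (Type u)} {fst : P ⟶ F} {snd : P ⟶ H}
    {f : F ⟶ G} {g : H ⟶ G} (hp : IsPullback fst snd f g) [Epi f] : Epi snd := by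
  have hf : Presheaf.IsLocallySurjective J f.hom :=
    (Sheaf.isLocallySurjective_iff_epi f).2 inferInstance
  rw [← Sheaf.isLocallySurjective_iff_epi]
  constructor
  intro U x
  refine J.superset_covering ?_ (hf.imageSieve_mem (g.hom.app (Opposite.op U) x))
  intro V h hh
  obtain ⟨y, hy⟩ := hh
  have hp2 : IsPullback (fst.hom.app (Opposite.op V)) (snd.hom.app (Opposite.op V))
      (f.hom.app (Opposite.op V)) (g.hom.app (Opposite.op V)) :=
    Functor.map_isPullback
      (sheafToPresheaf J (Type u) ⋙ (evaluation Cᵒᵖ (Type u)).obj (Opposite.op V)) hp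
  have heq : f.hom.app (Opposite.op V) y =
      g.hom.app (Opposite.op V) (H.val.map h.op x) := by
    have hnat := ConcreteCategory.congr_hom (g.hom.naturality h.op) x
    exact hy.trans hnat.symm
  obtain ⟨z, _, hz2⟩ := aux_types_exists_of_isPullback hp2 y _ heq
  exact ⟨z, hz2⟩

end AuxiliaryLemmas

/-- in a Grothendieck topos, all subobjects of all objects are
complemented if and only if all objects are decidable. -/
theorem allComplemented_iff_allDecidable
    {C : Type u} [SmallCategory C] (J : GrothendieckTopology C) :
    (∀ (X : Sheaf J (Type u)) (s : Subobject X), IsComplementedSub s) ↔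
      (∀ X : Sheaf J (Type u), IsDecidableObj X) := by
  constructor
  · intro h X
    exact h _ _
  · intro hdec X s
    let a : (s : Sheaf J (Type u)) ⟶ X := s.arrow
    haveI : Mono a := inferInstanceAs (Mono s.arrow)
    let P := pushout a a
    let inl : X ⟶ P := pushout.inl a a
    let inr : X ⟶ P := pushout.inr a a
    have hPO : IsPushout a a inl inr := IsPushout.of_hasPushout a a
    haveI : Mono inr := Adhesive.mono_of_isPushout_of_mono_left hPO
    haveI : Mono inl := Adhesive.mono_of_isPushout_of_mono_right hPO
    have hpb : IsPullback a a inl inr := Adhesive.isPullback_of_isPushout_of_mono_left hPO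
    let k : X ⟶ P ⨯ P := prod.lift inl inr
    have hdf : diag P ≫ Limits.prod.fst = 𝟙 P := prod.lift_fst _ _
    have hds : diag P ≫ Limits.prod.snd = 𝟙 P := prod.lift_snd _ _
    have hkf : k ≫ Limits.prod.fst = inl := prod.lift_fst _ _
    have hks : k ≫ Limits.prod.snd = inr := prod.lift_snd _ _
    have comm : (a ≫ inl) ≫ diag P = a ≫ k := by
      apply Limits.prod.hom_ext
      · rw [Category.assoc, Category.assoc, hdf, Category.comp_id, Category.assoc, hkf]
      · rw [Category.assoc, Category.assoc, hds, Category.comp_id, Category.assoc, hks]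
        exact hPO.w
    have hcone : ∀ sc : PullbackCone (diag P) k,
        sc.fst = sc.snd ≫ inl ∧ sc.fst = sc.snd ≫ inr := by
      intro sc
      constructor
      · have h := sc.condition =≫ Limits.prod.fst
        rwa [Category.assoc, hdf, Category.comp_id, Category.assoc, hkf] at h
      · have h := sc.condition =≫ Limits.prod.snd
        rwa [Category.assoc, hds, Category.comp_id, Category.assoc, hks] at h
    have hA : IsPullback (a ≫ inl) a (diag P) k := by
      refine IsPullback.of_isLimit (PullbackCone.IsLimit.mk comm
        (fun sc => hpb.lift sc.snd sc.snd ((hcone sc).1.symm.trans (hcone sc).2))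
        (fun sc => ?_) (fun sc => ?_) (fun sc m hm1 hm2 => ?_))
      · rw [← Category.assoc, hpb.lift_fst, ← (hcone sc).1]
      · exact hpb.lift_snd _ _ _
      · apply hpb.hom_ext <;>
          simp only [hpb.lift_fst, hpb.lift_snd] <;> exact hm2
    obtain ⟨t, hinf, hsup⟩ := hdec P
    let b : (t : Sheaf J (Type u)) ⟶ P ⨯ P := t.arrow
    haveI : Mono b := inferInstanceAs (Mono t.arrow)
    have hepi_e : Epi (coprod.desc (diag P) b) := by
      refine (aux_sup_mk_eq_top_iff_epi (diag P) b).1 ?_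
      rw [Subobject.mk_arrow]
      exact hsup
    let e : (P ⨿ (t : Sheaf J (Type u))) ⟶ P ⨯ P := coprod.desc (diag P) b
    haveI he : Epi e := hepi_e
    let Q := pullback e k
    have hQpb : IsPullback (pullback.fst e k) (pullback.snd e k) e k :=
      IsPullback.of_hasPullback e k
    have hB : IsPullback (pullback.fst b k) (pullback.snd b k) b k :=
      IsPullback.of_hasPullback b k
    have hjAw : ((a ≫ inl) ≫ coprod.inl) ≫ e = a ≫ k := by
      rw [Category.assoc, coprod.inl_desc]; exact hA.w
    let jA : (s : Sheaf J (Type u)) ⟶ Q := pullback.lift ((a ≫ inl) ≫ coprod.inl) a hjAw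
    have hjBw : (pullback.fst b k ≫ coprod.inr) ≫ e = pullback.snd b k ≫ k := by
      rw [Category.assoc, coprod.inr_desc]; exact hB.w
    let jB : pullback b k ⟶ Q := pullback.lift (pullback.fst b k ≫ coprod.inr)
      (pullback.snd b k) hjBw
    have sq1 : IsPullback jA (a ≫ inl) (pullback.fst e k) (coprod.inl) := by
      have w1 : jA ≫ pullback.fst e k = (a ≫ inl) ≫ coprod.inl := pullback.lift_fst _ _ _
      have liftw : ∀ sc : PullbackCone (pullback.fst e k) (coprod.inl : P ⟶ _),
          sc.snd ≫ diag P = (sc.fst ≫ pullback.snd e k) ≫ k := by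
        intro sc
        rw [← coprod.inl_desc (diag P) b, ← Category.assoc, ← sc.condition,
          Category.assoc, Category.assoc]
        exact congrArg (sc.fst ≫ ·) pullback.condition
      refine IsPullback.of_isLimit (PullbackCone.IsLimit.mk w1
        (fun sc => hA.lift sc.snd (sc.fst ≫ pullback.snd e k) (liftw sc))
        (fun sc => ?_) (fun sc => ?_) (fun sc m hm1 hm2 => ?_))
      · apply pullback.hom_ext
        · rw [Category.assoc, pullback.lift_fst, ← Category.assoc, hA.lift_fst, sc.condition]
        · rw [Category.assoc, pullback.lift_snd, hA.lift_snd]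
      · exact hA.lift_fst _ _ _
      · apply hA.hom_ext
        · rw [hA.lift_fst]; exact hm2
        · rw [hA.lift_snd, ← hm1, Category.assoc, pullback.lift_snd]
    have sq2 : IsPullback jB (pullback.fst b k) (pullback.fst e k) (coprod.inr) := by
      have w2 : jB ≫ pullback.fst e k = pullback.fst b k ≫ coprod.inr := pullback.lift_fst _ _ _
      have liftw : ∀ sc : PullbackCone (pullback.fst e k)
          (coprod.inr : (t : Sheaf J (Type u)) ⟶ _),
          sc.snd ≫ b = (sc.fst ≫ pullback.snd e k) ≫ k := by
        intro sc
        rw [← coprod.inr_desc (diag P) b, ← Category.assoc, ← sc.condition,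
          Category.assoc, Category.assoc]
        exact congrArg (sc.fst ≫ ·) pullback.condition
      refine IsPullback.of_isLimit (PullbackCone.IsLimit.mk w2
        (fun sc => pullback.lift sc.snd (sc.fst ≫ pullback.snd e k) (liftw sc))
        (fun sc => ?_) (fun sc => ?_) (fun sc m hm1 hm2 => ?_))
      · apply pullback.hom_ext
        · rw [Category.assoc, pullback.lift_fst, ← Category.assoc, pullback.lift_fst,
            sc.condition]
        · rw [Category.assoc, pullback.lift_snd, pullback.lift_snd]
      · exact pullback.lift_fst _ _ _
      · apply pullback.hom_ext
        · rw [pullback.lift_fst]; exact hm2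
        · rw [pullback.lift_snd, ← hm1, Category.assoc, pullback.lift_snd]
    have hvk := FinitaryExtensive.van_kampen'
      (BinaryCofan.mk (coprod.inl : P ⟶ P ⨿ (t : Sheaf J (Type u))) coprod.inr)
      (coprodIsCoprod _ _)
    have hcolim : Nonempty (IsColimit (BinaryCofan.mk jA jB)) := by
      rw [(BinaryCofan.isVanKampen_iff _).1 hvk (BinaryCofan.mk jA jB) (a ≫ inl)
        (pullback.fst b k) (pullback.fst e k)
        (pullback.lift_fst _ _ _).symm (pullback.lift_fst _ _ _).symm]
      exact ⟨sq1, sq2⟩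
    obtain ⟨hc⟩ := hcolim
    haveI hQepi : Epi (pullback.snd e k) := aux_epi_snd_of_isPullback hQpb
    let ψ : (s : Sheaf J (Type u)) ⨿ pullback b k ≅ Q := (coprodIsCoprod (s : Sheaf J (Type u)) (pullback b k)).coconePointUniqueUpToIso hc
    have hψl : coprod.inl ≫ ψ.hom = jA :=
      (coprodIsCoprod _ _).comp_coconePointUniqueUpToIso_hom hc ⟨WalkingPair.left⟩
    have hψr : coprod.inr ≫ ψ.hom = jB :=
      (coprodIsCoprod _ _).comp_coconePointUniqueUpToIso_hom hc ⟨WalkingPair.right⟩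
    have hdesc : coprod.desc a (pullback.snd b k) = ψ.hom ≫ pullback.snd e k := by
      apply coprod.hom_ext
      · rw [coprod.inl_desc, ← Category.assoc, hψl, pullback.lift_snd]
      · rw [coprod.inr_desc, ← Category.assoc, hψr, pullback.lift_snd]
    have hepi_final : Epi (coprod.desc a (pullback.snd b k)) := by
      rw [hdesc]; exact epi_comp _ _
    -- assemble the complement
    have hsd : (Subobject.pullback k).obj (Subobject.mk (diag P)) = s := by
      rw [aux_pullback_obj_mk_of_isPullback hA]
      exact Subobject.mk_arrow s
    have hst : (Subobject.pullback k).obj t = Subobject.mk (pullback.snd b k) := by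
      conv_lhs => rw [← Subobject.mk_arrow t]
      exact aux_pullback_obj_mk_snd b k
    refine ⟨(Subobject.pullback k).obj t, ?_, ?_⟩
    · rw [← hsd, ← Subobject.inf_pullback, hinf, aux_pullback_obj_bot]
    · rw [hst, ← Subobject.mk_arrow s]
      exact (aux_sup_mk_eq_top_iff_epi s.arrow (pullback.snd b k)).2 hepi_final
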